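/- If a weakly l-sequentially supercyclic bounded operator T on a Hilbert space is similar to an isometry, then T is similar to a unitary operator. -/

import Mathlib

open Filter Topology

/-- `y` is a weakly l-sequentially supercyclic vector for an operator `S`. -/
def WeaklyLSeqSupercyclicVector {W : Type*} [NormedAddCommGroup W] [NormedSpace ℂ W]
    (S : W →L[ℂ] W) (y : W) : Prop :=
  y ≠ 0 ∧ ∀ w : W, ∃ α : ℕ → ℂ, (∀ i, α i ≠ 0) ∧ ∃ n : ℕ → ℕ, StrictMono n ∧
    ∀ f : W →L[ℂ] ℂ, Tendsto (fun i => f (α i • (S ^ n i) y - w)) atTop (𝓝 0)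

theorem denseRange_of_wsc
    {X : Type*} [NormedAddCommGroup X] [InnerProductSpace ℂ X] [CompleteSpace X]
    (T : X →L[ℂ] X) (hsc : ∃ y : X, WeaklyLSeqSupercyclicVector T y) :
    DenseRange T := by
  obtain ⟨y, -, hy⟩ := hsc
  set K := (LinearMap.range (T : X →ₗ[ℂ] X)).topologicalClosure with hK
  have hKtop : K = ⊤ := by
    rw [← Submodule.orthogonal_eq_bot_iff]
    rw [Submodule.eq_bot_iff]
    intro v hv
    -- the functional x ↦ ⟪v, x⟫ vanishes on range T
    set f : X →L[ℂ] ℂ := innerSL ℂ v with hf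
    have hf0 : ∀ m : ℕ, 1 ≤ m → f ((T ^ m) y) = 0 := by
      intro m hm
      have hmem : (T ^ m) y ∈ K := by
        apply Submodule.le_topologicalClosure
        obtain ⟨k, rfl⟩ := Nat.exists_eq_add_of_le hm
        refine ⟨(T ^ k) y, ?_⟩
        rw [pow_add, pow_one]
        rfl
      have h0 := hv _ hmem
      simp only [hf, innerSL_apply_apply]
      rw [← inner_conj_symm]
      simp only [h0, map_zero]
    -- apply supercyclicity at w = v
    obtain ⟨α, hα, n, hn, htend⟩ := hy v
    have h1 : Tendsto (fun i => f (α i • (T ^ n i) y - v)) atTop (𝓝 0) := htend f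
    have h2 : ∀ i : ℕ, 1 ≤ i → f (α i • (T ^ n i) y - v) = - f v := by
      intro i hi
      have : f ((T ^ n i) y) = 0 := hf0 _ (le_trans hi (hn.le_apply))
      simp only [map_sub, map_smul, this, smul_zero, zero_sub]
    have h3 : Tendsto (fun _ : ℕ => - f v) atTop (𝓝 0) := by
      refine h1.congr' ?_
      filter_upwards [eventually_ge_atTop 1] with i hi
      exact h2 i hi
    have h4 : (0 : ℂ) = - f v := tendsto_nhds_unique h3 tendsto_const_nhds
    have h5 : f v = 0 := by simpa using h4.symm
    rw [hf] at h5
    simpa [inner_self_eq_zero] using h5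
  have : Dense (Set.range T) := by
    have := (Submodule.dense_iff_topologicalClosure_eq_top).mpr hKtop
    simpa [LinearMap.coe_range] using this
  exact this

theorem stmt16
    {X : Type*} [NormedAddCommGroup X] [InnerProductSpace ℂ X] [CompleteSpace X]
    (T : X →L[ℂ] X)
    (hsc : ∃ y : X, WeaklyLSeqSupercyclicVector T y)
    (S : X ≃L[ℂ] X) (hiso : ∀ x : X, ‖S.symm (T (S x))‖ = ‖x‖) :
    ∃ S' : X ≃L[ℂ] X,
      (∀ x : X, ‖S'.symm (T (S' x))‖ = ‖x‖) ∧
      Function.Surjective (fun x : X => S'.symm (T (S' x))) := by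
  refine ⟨S, hiso, ?_⟩
  set A : X →L[ℂ] X := (S.symm : X →L[ℂ] X).comp (T.comp (S : X →L[ℂ] X)) with hA
  have hAeq : ∀ x, A x = S.symm (T (S x)) := fun x => rfl
  have hAiso : Isometry A := by
    refine AddMonoidHomClass.isometry_of_norm A (fun x => hiso x)
  have hdense : DenseRange A := by
    have hT : DenseRange T := denseRange_of_wsc T hsc
    have h1 : DenseRange ((S.symm : X → X) ∘ (T : X → X) ∘ (S : X → X)) := by
      refine DenseRange.comp ?_ ?_ S.symm.continuous
      · exact S.symm.surjective.denseRange
      · exact hT.comp S.surjective.denseRange T.continuous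
    exact h1
  have hclosed : IsClosed (Set.range A) := hAiso.isClosedEmbedding.isClosed_range
  have : Set.range A = Set.univ := hclosed.closure_eq ▸ hdense.closure_range
  intro x
  have := this ▸ Set.mem_univ x
  exact Set.range_eq_univ.mp ‹Set.range A = Set.univ› x
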